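/- Let F ⊂ ℝ^2_{≥0} be a triangle with rational vertices and 𝔓 = ⋃_{i≥0}(iF ∩ ℕ^2) its convex polygonal semigroup with minimal generating set {n_1,…,n_m}. Then 𝔓̄ = {a ∈ ℕ^2 : a + n_i ∈ 𝔓 for all i} equals 𝔓. -/

import Mathlib

open Set
open scoped Pointwise

/-- Coercion of a lattice point of `ℕ²` into `ℚ²`. -/
def toQ (x : Fin 2 → ℕ) : Fin 2 → ℚ := fun i => (x i : ℚ)

/-- The rational cone `L_{ℚ≥}(G)` generated by a subset `G ⊆ ℚ²`. -/
def coneQ (G : Set (Fin 2 → ℚ)) : Set (Fin 2 → ℚ) :=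
  {x | ∃ (n : ℕ) (q : Fin n → ℚ) (f : Fin n → (Fin 2 → ℚ)),
    (∀ i, 0 ≤ q i) ∧ (∀ i, f i ∈ G) ∧ x = ∑ i, q i • f i}

/-- The ray from the origin through `v ∈ ℚ²`. -/
def rayQ (v : Fin 2 → ℚ) : Set (Fin 2 → ℚ) := {x | ∃ q : ℚ, 0 ≤ q ∧ x = q • v}

/-- The lattice points on the ray from the origin through `v`. -/
def rayN (v : Fin 2 → ℕ) : Set (Fin 2 → ℕ) := {x | toQ x ∈ rayQ (toQ v)}

/-- Square of the Euclidean norm of a lattice point. -/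
def normSq (x : Fin 2 → ℕ) : ℕ := x 0 ^ 2 + x 1 ^ 2

/-- The cone `𝒞 = L_{ℚ≥}(S) ∩ ℕ²` of a subsemigroup `S ⊆ ℕ²`. -/
def coneN (S : Set (Fin 2 → ℕ)) : Set (Fin 2 → ℕ) := {x | toQ x ∈ coneQ (toQ '' S)}

/-- The interior `int(X)` of `X` relative to the extremal rays through `v1, v2`. -/
def interiorOf (X : Set (Fin 2 → ℕ)) (v1 v2 : Fin 2 → ℕ) : Set (Fin 2 → ℕ) :=
  X \ (rayN v1 ∪ rayN v2)

/-- `S̄ = {a ∈ ℕ² : a + g ∈ S for every generator g ∈ G}`. -/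
def sbar (S : Set (Fin 2 → ℕ)) (G : Finset (Fin 2 → ℕ)) : Set (Fin 2 → ℕ) :=
  {a | ∀ g ∈ G, a + g ∈ S}

/-- `n` is the nonzero element of minimal (Euclidean) norm of `T` on the ray `τ`. -/
def IsMinOnRay (T τ : Set (Fin 2 → ℕ)) (n : Fin 2 → ℕ) : Prop :=
  n ∈ T ∩ τ ∧ n ≠ 0 ∧ ∀ m ∈ T ∩ τ, m ≠ 0 → normSq n ≤ normSq m

/-- The Cohen–Macaulay criterion for a simplicial semigroup `T ⊆ ℕ²` with cone `C`
and extremal rays `τ1, τ2`: for the minimal elements `n1, n2` of `T` on the two rays,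
every `a ∈ C \ T` satisfies `a + n1 ∉ T` or `a + n2 ∉ T`. -/
def IsCMsg (T C τ1 τ2 : Set (Fin 2 → ℕ)) : Prop :=
  ∃ n1 n2 : Fin 2 → ℕ, IsMinOnRay T τ1 n1 ∧ IsMinOnRay T τ2 n2 ∧
    ∀ a ∈ C \ T, a + n1 ∉ T ∨ a + n2 ∉ T

/-- `S` is Buchsbaum iff (Rosales) the semigroup `S̄` is Cohen–Macaulay. -/
def IsBuchsbaumSG (S : Set (Fin 2 → ℕ)) (G : Finset (Fin 2 → ℕ))
    (C τ1 τ2 : Set (Fin 2 → ℕ)) : Prop :=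
  IsCMsg (sbar S G) C τ1 τ2

/-- A subsemigroup of `ℕ²` is generated by a single element. -/
def genByOne (T : Set (Fin 2 → ℕ)) : Prop :=
  ∃ n : Fin 2 → ℕ, T = {x | ∃ k : ℕ, x = k • n}

/-- The circle semigroup of the circle (disk) of center `(a,b)` and radius `r`. -/
def circleSG (a b r : ℝ) : Set (Fin 2 → ℕ) :=
  {x | ∃ i : ℕ, ((x 0 : ℝ) - i * a) ^ 2 + ((x 1 : ℝ) - i * b) ^ 2 ≤ (i * r) ^ 2}

/-- The convex body semigroup `⋃ i, (i·F ∩ ℕ²)` of a convex body `F ⊆ ℚ²`. -/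
def polySG (F : Set (Fin 2 → ℚ)) : Set (Fin 2 → ℕ) :=
  {x | ∃ i : ℕ, toQ x ∈ (i : ℚ) • F}

/-- `G` is a minimal generating set of the semigroup `S`. -/
def minimalGenSet (S : Set (Fin 2 → ℕ)) (G : Finset (Fin 2 → ℕ)) : Prop :=
  (AddSubmonoid.closure (G : Set (Fin 2 → ℕ)) : Set (Fin 2 → ℕ)) = S ∧
  ∀ g ∈ G, g ∉ (AddSubmonoid.closure ((G.erase g : Finset (Fin 2 → ℕ)) :
    Set (Fin 2 → ℕ)) : Set (Fin 2 → ℕ))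

/-- `S` is simplicial with extremal rays through `v1` and `v2`. -/
def Simplicial (S : Set (Fin 2 → ℕ)) (v1 v2 : Fin 2 → ℕ) : Prop :=
  v1 ≠ 0 ∧ v2 ≠ 0 ∧ rayN v1 ≠ rayN v2 ∧
  coneQ (toQ '' S) = coneQ {toQ v1, toQ v2}

section AuxStmt11

open Finset

/-- Barycentric-coordinate characterization of the convex hull of three points. -/
lemma aux_hull (A B C : Fin 2 → ℚ) : convexHull ℚ {A, B, C} =
    {x : Fin 2 → ℚ | ∃ lam : Fin 3 → ℚ, (∀ i, 0 ≤ lam i) ∧ (∑ i, lam i) = 1 ∧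
      x = ∑ i, lam i • ![A, B, C] i} := by
  apply le_antisymm
  · apply convexHull_min
    · intro x hx
      rcases hx with h | h | h
      · exact ⟨![1,0,0], by decide, by simp [Fin.sum_univ_three], by
          simp [Fin.sum_univ_three, h]⟩
      · exact ⟨![0,1,0], by decide, by simp [Fin.sum_univ_three], by
          simp [Fin.sum_univ_three, h]⟩
      · exact ⟨![0,0,1], by decide, by simp [Fin.sum_univ_three], by
          simp [Fin.sum_univ_three, Set.mem_singleton_iff.mp h]⟩
    · rintro x ⟨lx, hlx0, hlx1, rfl⟩ y ⟨ly, hly0, hly1, rfl⟩ a b ha hb hab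
      refine ⟨fun i => a * lx i + b * ly i,
        fun i => add_nonneg (mul_nonneg ha (hlx0 i)) (mul_nonneg hb (hly0 i)), ?_, ?_⟩
      · rw [Finset.sum_add_distrib, ← Finset.mul_sum, ← Finset.mul_sum, hlx1, hly1]
        simpa using hab
      · rw [Finset.smul_sum, Finset.smul_sum, ← Finset.sum_add_distrib]
        refine Finset.sum_congr rfl fun i _ => ?_
        rw [smul_smul, smul_smul, ← add_smul]
  · rintro x ⟨lam, h0, h1, rfl⟩
    have := Finset.centerMass_mem_convexHull (R := ℚ) (s := ({A, B, C} : Set (Fin 2 → ℚ)))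
      (Finset.univ : Finset (Fin 3)) (w := lam) (fun i _ => h0 i)
      (by rw [h1]; norm_num) (z := ![A, B, C]) (fun i _ => by fin_cases i <;> simp)
    rwa [Finset.centerMass, h1, inv_one, one_smul] at this

/-- The core combinatorial/arithmetic lemma: if `q` is a "gap" of the triangle
semigroup (in barycentric coordinates given by `σ`), then some vertex direction
blocks it forever. -/
lemma aux_core (V : Fin 3 → Fin 2 → ℚ) (σ : (Fin 2 → ℚ) × ℚ → Fin 3 → ℚ)
    (hadd : ∀ z w, σ (z + w) = σ z + σ w)
    (hsmul : ∀ (c : ℚ) z, σ (c • z) = c • σ z)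
    (hT1 : ∀ z, (∑ i, σ z i • V i) = z.1) (hT2 : ∀ z, (∑ i, σ z i) = z.2)
    (hσV : ∀ j, σ (V j, 1) = fun i => if i = j then 1 else 0)
    (q : Fin 2 → ℚ) (hq : q ≠ 0)
    (hbad : ∀ k : ℕ, ∃ i, σ (q, (k : ℚ)) i < 0) :
    ∃ j : Fin 3, V j ≠ 0 ∧
      ∀ N : ℕ, 0 < N → ∀ k : ℕ, ∃ i, σ (q + (N : ℚ) • V j, (k : ℚ)) i < 0 := by
  classical
  set d : Fin 3 → ℚ := σ (0, 1) with hd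
  set m : (Fin 2 → ℚ) → Fin 3 → ℚ := fun x => σ (x, 0) with hm
  have hrel : ∀ (x : Fin 2 → ℚ) (t : ℚ) (i : Fin 3), σ (x, t) i = m x i + t * d i := by
    intro x t i
    have hz : ((x, t) : (Fin 2 → ℚ) × ℚ) = (x, 0) + t • (0, 1) := by
      simp [Prod.ext_iff]
    rw [hz, hadd, hsmul]
    simp [hm, hd, mul_comm]
  have hmadd : ∀ x y, m (x + y) = m x + m y := by
    intro x y
    have : ((x + y, 0) : (Fin 2 → ℚ) × ℚ) = (x, 0) + (y, 0) := by simp [Prod.ext_iff]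
    rw [hm]; simp only [this, hadd]
  have hmsmul : ∀ (c : ℚ) x, m (c • x) = c • m x := by
    intro c x
    have : ((c • x, 0) : (Fin 2 → ℚ) × ℚ) = c • (x, 0) := by simp [Prod.ext_iff]
    rw [hm]; simp only [this, hsmul]
  have hsumd : (∑ i, d i) = 1 := hT2 (0, 1)
  have hsummq : (∑ i, m q i) = 0 := hT2 (q, 0)
  have hmV : ∀ j i, m (V j) i = (if i = j then 1 else 0) - d i := by
    intro j i
    have := hrel (V j) 1 i
    rw [hσV j] at this
    simp only at this
    linarith [this]
  have hstar : ∀ t : ℚ, (∀ i, 0 ≤ m q i + t * d i) → 0 < t := by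
    intro t hnn
    by_contra hle
    push_neg at hle
    have hsum : (∑ i, (m q i + t * d i)) = t := by
      rw [Finset.sum_add_distrib, hsummq, ← Finset.mul_sum, hsumd]; ring
    have ht0 : t = 0 := le_antisymm hle (hsum ▸ Finset.sum_nonneg fun i _ => hnn i)
    have hall : ∀ i, m q i + t * d i = 0 := by
      have := (Finset.sum_eq_zero_iff_of_nonneg (fun i _ => hnn i)).mp (by rw [hsum, ht0])
      exact fun i => this i (Finset.mem_univ i)
    have hq0 : q = 0 := by
      have h1 : (∑ i, σ ((q : Fin 2 → ℚ), (0:ℚ)) i • V i) = q := hT1 (q, 0)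
      have : ∀ i, σ (q, (0:ℚ)) i = 0 := by
        intro i; rw [hrel]; have := hall i; rw [ht0] at this; linarith [this]
      rw [← h1]
      exact Finset.sum_eq_zero fun i _ => by rw [this i, zero_smul]
    exact hq hq0
  have hV0 : ∀ j, V j = 0 → d = fun i => if i = j then 1 else 0 := by
    intro j h
    have := hσV j
    rw [h] at this
    rw [hd]; rw [← this]
  set k0 : ℕ := Finset.univ.sup fun i => ⌈(-(m q i)) / d i⌉₊ with hk0
  have hPk0 : ∀ i, 0 < d i → 0 ≤ m q i + (k0 : ℚ) * d i := by
    intro i hdi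
    have h1 : (-(m q i)) / d i ≤ (⌈(-(m q i)) / d i⌉₊ : ℚ) := Nat.le_ceil _
    have h2 : (⌈(-(m q i)) / d i⌉₊ : ℕ) ≤ k0 :=
      Finset.le_sup (f := fun i => ⌈(-(m q i)) / d i⌉₊) (Finset.mem_univ i)
    have h3 : (-(m q i)) / d i ≤ (k0 : ℚ) := h1.trans (by exact_mod_cast h2)
    rw [div_le_iff₀ hdi] at h3
    linarith
  by_cases hZ : ∃ i, d i = 0 ∧ m q i < 0
  · -- Case 1: a constraint with `d i = 0` is violated.
    obtain ⟨i, hdi, hmi⟩ := hZ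
    have hjj : ∀ i0 : Fin 3, ∃ j₁ j₂ : Fin 3, j₁ ≠ j₂ ∧ j₁ ≠ i0 ∧ j₂ ≠ i0 := by decide
    obtain ⟨j₁, j₂, hj12, hj1i, hj2i⟩ := hjj i
    have key : ∀ j, j ≠ i → V j ≠ 0 → ∀ N : ℕ, 0 < N → ∀ k : ℕ,
        ∃ i', σ (q + (N : ℚ) • V j, (k : ℚ)) i' < 0 := by
      intro j hji hVj N hN k
      refine ⟨i, ?_⟩
      rw [hrel, hmadd, hmsmul]
      have : m (V j) i = 0 := by
        rw [hmV]; simp [if_neg (Ne.symm hji ∘ Eq.symm ∘ id), hdi]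
        intro h; exact (hji h.symm).elim
      simp only [Pi.add_apply, Pi.smul_apply, smul_eq_mul, this, hdi]
      linarith
    by_cases hv1 : V j₁ = 0
    · have hv2 : V j₂ ≠ 0 := by
        intro hv2
        have h1 := hV0 j₁ hv1
        have h2 := hV0 j₂ hv2
        have := congrFun (h1.symm.trans h2) j₁
        simp [if_pos rfl, if_neg hj12] at this
      exact ⟨j₂, hv2, key j₂ hj2i hv2⟩
    · exact ⟨j₁, hv1, key j₁ hj1i hv1⟩
  · -- Case 2: the violated constraint has `d i < 0`.
    push_neg at hZ
    obtain ⟨i₂0, hbad0⟩ := hbad k0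
    rw [hrel] at hbad0
    have hd2neg : d i₂0 < 0 := by
      rcases lt_trichotomy (d i₂0) 0 with h | h | h
      · exact h
      · exfalso; rw [h, mul_zero, add_zero] at hbad0; exact absurd hbad0 (not_lt.mpr (hZ i₂0 h))
      · exact absurd hbad0 (not_lt.mpr (hPk0 i₂0 h))
    have hPne : ∃ i, 0 < d i := by
      by_contra h
      push_neg at h
      have : (∑ i, d i) ≤ 0 := Finset.sum_nonpos fun i _ => h i
      rw [hsumd] at this; linarith
    obtain ⟨ip, hip⟩ := hPne
    obtain ⟨i₁, hi₁mem, hi₁max⟩ := Finset.exists_max_image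
      (Finset.univ.filter fun i => 0 < d i) (fun i => (-(m q i)) / d i)
      ⟨ip, Finset.mem_filter.mpr ⟨Finset.mem_univ _, hip⟩⟩
    obtain ⟨i₂, hi₂mem, hi₂min⟩ := Finset.exists_min_image
      (Finset.univ.filter fun i => d i < 0) (fun i => m q i / (-(d i)))
      ⟨i₂0, Finset.mem_filter.mpr ⟨Finset.mem_univ _, hd2neg⟩⟩
    have hdi₁ : 0 < d i₁ := (Finset.mem_filter.mp hi₁mem).2
    have hdi₂ : d i₂ < 0 := (Finset.mem_filter.mp hi₂mem).2
    have hjex : ∀ a b : Fin 3, ∃ j, j ≠ a ∧ j ≠ b := by decide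
    obtain ⟨j, hji₁, hji₂⟩ := hjex i₁ i₂
    have hVj : V j ≠ 0 := by
      intro hv
      have := congrFun (hV0 j hv) i₁
      rw [if_neg (fun h => hji₁ h.symm)] at this
      rw [this] at hdi₁; linarith
    refine ⟨j, hVj, ?_⟩
    intro N hN k
    by_contra hcon
    push_neg at hcon
    have hcon' : ∀ i', 0 ≤ m q i' + (N : ℚ) * m (V j) i' + (k : ℚ) * d i' := by
      intro i'
      have := hcon i'
      rw [hrel, hmadd, hmsmul] at this
      simpa [mul_comm] using this
    set t : ℚ := (k : ℚ) - (N : ℚ) with ht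
    have hne : ∀ i', i' ≠ j → 0 ≤ m q i' + t * d i' := by
      intro i' hi'
      have := hcon' i'
      rw [hmV] at this
      rw [if_neg hi'] at this
      rw [ht]; ring_nf; ring_nf at this; linarith
    have ht1 : 0 ≤ m q i₁ + t * d i₁ := hne i₁ (fun h => hji₁ h.symm)
    have ht2 : 0 ≤ m q i₂ + t * d i₂ := hne i₂ (fun h => hji₂ h.symm)
    have htlow : (-(m q i₁)) / d i₁ ≤ t := by rw [div_le_iff₀ hdi₁]; linarith
    have hthigh : t ≤ m q i₂ / (-(d i₂)) := by
      rw [le_div_iff₀ (by linarith : 0 < -(d i₂))]; nlinarith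
    have hallnn : ∀ i', 0 ≤ m q i' + t * d i' := by
      intro i'
      rcases lt_trichotomy (d i') 0 with h | h | h
      · have := hi₂min i' (Finset.mem_filter.mpr ⟨Finset.mem_univ _, h⟩)
        have h2 : t ≤ m q i' / (-(d i')) := hthigh.trans this
        rw [le_div_iff₀ (by linarith : 0 < -(d i'))] at h2
        nlinarith
      · rw [h]; simpa using hZ i' h
      · have := hi₁max i' (Finset.mem_filter.mpr ⟨Finset.mem_univ _, h⟩)
        have h2 : (-(m q i')) / d i' ≤ t := le_trans this htlow
        rw [div_le_iff₀ h] at h2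
        linarith
    have htpos : 0 < t := hstar t hallnn
    have hkN : N < k := by
      have : (N : ℚ) < (k : ℚ) := by linarith [htpos]
      exact_mod_cast this
    obtain ⟨i', hi'⟩ := hbad (k - N)
    rw [hrel] at hi'
    have hcast : ((k - N : ℕ) : ℚ) = t := by
      rw [ht]; push_cast [Nat.cast_sub (le_of_lt hkN)]; ring
    rw [hcast] at hi'
    exact absurd (hallnn i') (not_le.mpr hi')

/-- Existence of the barycentric coordinate map `σ` for an affinely independent triple. -/
lemma aux_sigma (A B C : Fin 2 → ℚ) (hind : AffineIndependent ℚ ![A, B, C]) :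
    ∃ σ : (Fin 2 → ℚ) × ℚ → Fin 3 → ℚ,
      (∀ z w, σ (z + w) = σ z + σ w) ∧
      (∀ (c : ℚ) z, σ (c • z) = c • σ z) ∧
      (∀ z, (∑ i, σ z i • ![A, B, C] i) = z.1) ∧
      (∀ z, (∑ i, σ z i) = z.2) ∧
      (∀ μ : Fin 3 → ℚ, σ (∑ i, μ i • ![A, B, C] i, ∑ i, μ i) = μ) := by
  set T : (Fin 3 → ℚ) →ₗ[ℚ] ((Fin 2 → ℚ) × ℚ) :=
    { toFun := fun μ => (∑ i, μ i • ![A, B, C] i, ∑ i, μ i)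
      map_add' := by
        intro x y
        simp [Prod.ext_iff, Finset.sum_add_distrib, add_smul]
      map_smul' := by
        intro c x
        simp [Prod.ext_iff, Finset.smul_sum, smul_smul, Finset.mul_sum] } with hTdef
  have hTapp : ∀ μ, T μ = (∑ i, μ i • ![A, B, C] i, ∑ i, μ i) := fun μ => rfl
  have hinj : Function.Injective T := by
    rw [← LinearMap.ker_eq_bot, LinearMap.ker_eq_bot']
    intro μ hμ
    rw [hTapp] at hμ
    have h1 : (∑ i, μ i • ![A, B, C] i) = 0 := congrArg Prod.fst hμ
    have h2 : (∑ i, μ i) = 0 := congrArg Prod.snd hμ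
    have := affineIndependent_iff.mp hind Finset.univ μ h2 h1
    funext i
    exact this i (Finset.mem_univ i)
  have hrank : Module.finrank ℚ (Fin 3 → ℚ) = Module.finrank ℚ ((Fin 2 → ℚ) × ℚ) := by
    simp [Module.finrank_prod, Module.finrank_pi]
  have hsurj : Function.Surjective T :=
    (LinearMap.injective_iff_surjective_of_finrank_eq_finrank hrank).mp hinj
  set e : (Fin 3 → ℚ) ≃ₗ[ℚ] ((Fin 2 → ℚ) × ℚ) := LinearEquiv.ofBijective T ⟨hinj, hsurj⟩
    with hedef
  have heapp : ∀ μ, e μ = T μ := fun μ => rfl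
  refine ⟨fun z => e.symm z, ?_, ?_, ?_, ?_, ?_⟩
  · intro z w; exact map_add e.symm z w
  · intro c z; exact map_smul e.symm c z
  · intro z
    have := e.apply_symm_apply z
    rw [heapp, hTapp] at this
    exact congrArg Prod.fst this
  · intro z
    have := e.apply_symm_apply z
    rw [heapp, hTapp] at this
    exact congrArg Prod.snd this
  · intro μ
    have h : (∑ i, μ i • ![A, B, C] i, ∑ i, μ i) = e μ := (heapp μ).symm
    show e.symm (∑ i, μ i • ![A, B, C] i, ∑ i, μ i) = μ
    rw [h]
    exact e.symm_apply_apply μ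

end AuxStmt11

/-- Membership in the triangle semigroup in terms of barycentric coordinates. -/
lemma aux_mem (A B C : Fin 2 → ℚ) (σ : (Fin 2 → ℚ) × ℚ → Fin 3 → ℚ)
    (hT1 : ∀ z, (∑ i, σ z i • ![A, B, C] i) = z.1)
    (hT2 : ∀ z, (∑ i, σ z i) = z.2)
    (huniq : ∀ μ : Fin 3 → ℚ, σ (∑ i, μ i • ![A, B, C] i, ∑ i, μ i) = μ)
    (x : Fin 2 → ℕ) :
    x ∈ polySG (convexHull ℚ {A, B, C}) ↔ ∃ k : ℕ, ∀ i, 0 ≤ σ (toQ x, (k : ℚ)) i := by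
  constructor
  · rintro ⟨i, hx⟩
    rw [Set.mem_smul_set] at hx
    obtain ⟨y, hyF, hyx⟩ := hx
    rw [aux_hull] at hyF
    obtain ⟨lam, h0, h1, rfl⟩ := hyF
    refine ⟨i, ?_⟩
    have hs1 : (∑ j, ((i : ℚ) * lam j) • ![A, B, C] j) = toQ x := by
      rw [← hyx, Finset.smul_sum]
      exact Finset.sum_congr rfl fun j _ => (smul_smul (i : ℚ) (lam j) _).symm
    have hs2 : (∑ j, (i : ℚ) * lam j) = (i : ℚ) := by
      rw [← Finset.mul_sum, h1, mul_one]
    have hμ := huniq (fun j => (i : ℚ) * lam j)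
    rw [hs1, hs2] at hμ
    rw [hμ]
    exact fun j => mul_nonneg (Nat.cast_nonneg i) (h0 j)
  · rintro ⟨k, hk⟩
    have h1 : (∑ i, σ (toQ x, (k : ℚ)) i • ![A, B, C] i) = toQ x := hT1 (toQ x, (k : ℚ))
    have h2 : (∑ i, σ (toQ x, (k : ℚ)) i) = (k : ℚ) := hT2 (toQ x, (k : ℚ))
    rcases Nat.eq_zero_or_pos k with hk0 | hkpos
    · have hz : ∀ i, σ (toQ x, (k : ℚ)) i = 0 := by
        have := (Finset.sum_eq_zero_iff_of_nonneg (fun i _ => hk i)).mp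
          (by rw [h2, hk0]; norm_num)
        exact fun i => this i (Finset.mem_univ i)
      have hx0 : toQ x = 0 := by
        rw [← h1]
        exact Finset.sum_eq_zero fun i _ => by rw [hz i, zero_smul]
      refine ⟨0, ?_⟩
      rw [Set.mem_smul_set]
      exact ⟨A, subset_convexHull ℚ _ (by simp), by rw [hx0]; norm_num⟩
    · have hkQ : (0:ℚ) < (k : ℚ) := by exact_mod_cast hkpos
      refine ⟨k, ?_⟩
      rw [Set.mem_smul_set]
      refine ⟨(k : ℚ)⁻¹ • toQ x, ?_, smul_inv_smul₀ (ne_of_gt hkQ) _⟩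
      rw [aux_hull]
      refine ⟨fun j => σ (toQ x, (k : ℚ)) j / (k : ℚ),
        fun j => div_nonneg (hk j) (le_of_lt hkQ), ?_, ?_⟩
      · rw [← Finset.sum_div, h2, div_self (ne_of_gt hkQ)]
      · conv_lhs => rw [← h1]
        rw [Finset.smul_sum]
        exact Finset.sum_congr rfl fun j _ => by rw [smul_smul, inv_mul_eq_div]

lemma aux_toQ_add (x y : Fin 2 → ℕ) : toQ (x + y) = toQ x + toQ y := by
  funext i
  simp [toQ]

/-- For the convex polygonal semigroup `𝔓` of a triangle with
rational vertices, `𝔓̄ = 𝔓`. -/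
theorem stmt11 (A B C : Fin 2 → ℚ)
    (hpos : ∀ i, 0 ≤ A i ∧ 0 ≤ B i ∧ 0 ≤ C i)
    (hind : AffineIndependent ℚ ![A, B, C])
    (S : Set (Fin 2 → ℕ)) (hS : S = polySG (convexHull ℚ {A, B, C}))
    (G : Finset (Fin 2 → ℕ)) (hG : minimalGenSet S G)
    (v1 v2 : Fin 2 → ℕ) (hsimp : Simplicial S v1 v2) :
    sbar S G = S := by
  obtain ⟨hGgen, -⟩ := hG
  obtain ⟨σ, hadd, hsmul, hT1, hT2, huniq⟩ := aux_sigma A B C hind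
  have hσV : ∀ j, σ (![A, B, C] j, 1) = fun i => if i = j then 1 else 0 := by
    intro j
    have h := huniq (fun i => if i = j then (1 : ℚ) else 0)
    have hs1 : (∑ i, (if i = j then (1 : ℚ) else 0) • ![A, B, C] i) = ![A, B, C] j := by
      simp only [ite_smul, one_smul, zero_smul]
      simp
    have hs2 : (∑ i, (if i = j then (1 : ℚ) else 0)) = 1 := by simp
    rw [hs1, hs2] at h
    exact h
  have hmem : ∀ x : Fin 2 → ℕ, x ∈ S ↔ ∃ k : ℕ, ∀ i, 0 ≤ σ (toQ x, (k : ℚ)) i := by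
    intro x
    rw [hS]
    exact aux_mem A B C σ hT1 hT2 huniq x
  ext a
  simp only [sbar, Set.mem_setOf_eq]
  constructor
  · intro ha
    by_cases ha0 : a = 0
    · rw [ha0, ← hGgen]
      exact AddSubmonoid.zero_mem _
    have hstep : ∀ s, s ∈ S → s ≠ 0 → a + s ∈ S := by
      intro s hs
      rw [← hGgen] at hs
      refine AddSubmonoid.closure_induction
        (motive := fun x _ => x ≠ 0 → a + x ∈ S) ?_ ?_ ?_ hs
      · intro g hgG _
        exact ha g hgG
      · intro h; exact absurd rfl h
      · intro x y hx hy px py hxy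
        by_cases hx0 : x = 0
        · rw [hx0, zero_add]
          rw [hx0, zero_add] at hxy
          exact py hxy
        · by_cases hy0 : y = 0
          · rw [hy0, add_zero]
            exact px hx0
          · have h1 : a + x ∈ S := px hx0
            have h2 : y ∈ S := by rw [← hGgen]; exact hy
            rw [← add_assoc, ← hGgen]
            rw [← hGgen] at h1 h2
            exact AddSubmonoid.add_mem _ h1 h2
    by_contra hnot
    have hbad : ∀ k : ℕ, ∃ i, σ (toQ a, (k : ℚ)) i < 0 := by
      intro k
      by_contra h
      push_neg at h
      exact hnot ((hmem a).mpr ⟨k, h⟩)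
    have hq : toQ a ≠ 0 := by
      intro h
      apply ha0
      funext i
      have := congrFun h i
      simpa [toQ] using this
    obtain ⟨j, hVj, hkey⟩ := aux_core ![A, B, C] σ hadd hsmul hT1 hT2 hσV (toQ a) hq hbad
    have hvpos : ∀ c, 0 ≤ ![A, B, C] j c := by
      intro c
      fin_cases j
      · exact (hpos c).1
      · exact (hpos c).2.1
      · exact (hpos c).2.2
    have hden : ∀ r : ℚ, 0 ≤ r → ∃ n : ℕ, (n : ℚ) = (r.den : ℚ) * r := by
      intro r hr
      refine ⟨r.num.toNat, ?_⟩
      have h1 : ((r.num.toNat : ℕ) : ℚ) = ((r.num : ℤ) : ℚ) := by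
        exact_mod_cast congrArg (fun z : ℤ => (z : ℚ))
          (Int.toNat_of_nonneg (Rat.num_nonneg.mpr hr))
      rw [h1, mul_comm, eq_comm]
      have h2 := Rat.num_div_den r
      have h3 : ((r.den : ℤ) : ℚ) ≠ 0 := by
        exact_mod_cast (Nat.cast_ne_zero (R := ℚ)).mpr (Rat.den_ne_zero r)
      nth_rewrite 1 [← h2]
      push_cast
      field_simp
    obtain ⟨n0, hn0⟩ := hden (![A, B, C] j 0) (hvpos 0)
    obtain ⟨n1, hn1⟩ := hden (![A, B, C] j 1) (hvpos 1)
    set N : ℕ := (![A, B, C] j 0).den * (![A, B, C] j 1).den with hN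
    have hNpos : 0 < N := Nat.mul_pos (![A, B, C] j 0).pos (![A, B, C] j 1).pos
    set s : Fin 2 → ℕ := ![n0 * (![A, B, C] j 1).den, n1 * (![A, B, C] j 0).den] with hsdef
    have hts : toQ s = (N : ℚ) • ![A, B, C] j := by
      funext c
      fin_cases c
      · show ((n0 * (![A, B, C] j 1).den : ℕ) : ℚ) = ((N : ℚ) • ![A, B, C] j) 0
        simp only [Pi.smul_apply, smul_eq_mul, hN]
        push_cast
        rw [hn0]
        ring
      · show ((n1 * (![A, B, C] j 0).den : ℕ) : ℚ) = ((N : ℚ) • ![A, B, C] j) 1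
        simp only [Pi.smul_apply, smul_eq_mul, hN]
        push_cast
        rw [hn1]
        ring
    have hsS : s ∈ S := by
      apply (hmem s).mpr
      refine ⟨N, ?_⟩
      have hz : ((toQ s, (N : ℚ)) : (Fin 2 → ℚ) × ℚ)
          = (N : ℚ) • ((![A, B, C] j, 1) : (Fin 2 → ℚ) × ℚ) := by
        rw [hts]
        simp [Prod.ext_iff]
      rw [hz, hsmul, hσV]
      intro i
      simp only [Pi.smul_apply, smul_eq_mul]
      split_ifs
      · simp
      · simp
    have hs0 : s ≠ 0 := by
      intro h
      apply hVj
      have h0 : toQ s = 0 := by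
        rw [h]
        funext c
        simp [toQ]
      rw [hts] at h0
      rcases smul_eq_zero.mp h0 with h' | h'
      · exact absurd h' (by exact_mod_cast hNpos.ne')
      · exact h'
    have hfinal := hstep s hsS hs0
    obtain ⟨k, hk⟩ := (hmem (a + s)).mp hfinal
    have htr : toQ (a + s) = toQ a + (N : ℚ) • ![A, B, C] j := by
      rw [aux_toQ_add, hts]
    obtain ⟨i, hi⟩ := hkey N hNpos k
    rw [← htr] at hi
    exact absurd (hk i) (not_le.mpr hi)
  · intro ha g hg
    rw [← hGgen] at ha ⊢
    exact AddSubmonoid.add_mem _ ha (AddSubmonoid.subset_closure hg)
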